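/- Let G = (V, E) be a finite simple graph with all degrees d_v ≥ 1, let a > 0, λ ∈ (0, a], and μ, ν ≥ 0 with μ + ν ≥ 1. Fix α ∈ [1-μ, ν] and let x : V → ℕ. Define r(u,v) := λ/(a · d_u^μ · d_v^ν) for adjacent u, v. Then Σ_{v ∈ V} Σ_{u ∈ N(v)} x(u) · r(u,v) · d_v^α ≤ (λ/a) · Σ_{u ∈ V} x(u) · d_u^α. In particular the total weighted birth rate is at most the total weighted death rate Σ_u x(u) d_u^α. -/

import Mathlib

theorem stmt2 {V : Type*} [Fintype V] [DecidableEq V] (G : SimpleGraph V)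
    [DecidableRel G.Adj] (hdeg : ∀ v, 1 ≤ G.degree v)
    (a lam μ ν α : ℝ) (ha : 0 < a) (hlam0 : 0 < lam) (hlam : lam ≤ a)
    (hμ : 0 ≤ μ) (hν : 0 ≤ ν) (hμν : 1 ≤ μ + ν)
    (hα1 : 1 - μ ≤ α) (hα2 : α ≤ ν)
    (x : V → ℕ) :
    (∑ v, ∑ u ∈ G.neighborFinset v,
        (x u : ℝ) * (lam / (a * (G.degree u : ℝ) ^ μ * (G.degree v : ℝ) ^ ν))
          * (G.degree v : ℝ) ^ α)
      ≤ (lam / a) * ∑ u, (x u : ℝ) * (G.degree u : ℝ) ^ α ∧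
    (∑ v, ∑ u ∈ G.neighborFinset v,
        (x u : ℝ) * (lam / (a * (G.degree u : ℝ) ^ μ * (G.degree v : ℝ) ^ ν))
          * (G.degree v : ℝ) ^ α)
      ≤ ∑ u, (x u : ℝ) * (G.degree u : ℝ) ^ α := by
  set D : V → ℝ := fun v => (G.degree v : ℝ) with hD
  have hD1 : ∀ v, (1 : ℝ) ≤ D v := fun v => by
    simpa [hD] using (Nat.one_le_cast (α := ℝ) |>.mpr (hdeg v))
  have hD0 : ∀ v, (0 : ℝ) < D v := fun v => lt_of_lt_of_le one_pos (hD1 v)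
  -- swap the sums
  have hswap :
      (∑ v, ∑ u ∈ G.neighborFinset v,
          (x u : ℝ) * (lam / (a * D u ^ μ * D v ^ ν)) * D v ^ α)
        = ∑ u, ∑ v ∈ G.neighborFinset u,
            (x u : ℝ) * (lam / (a * D u ^ μ * D v ^ ν)) * D v ^ α := by
    simp only [SimpleGraph.neighborFinset_eq_filter, Finset.sum_filter]
    rw [Finset.sum_comm]
    congr 1; ext u; congr 1; ext v
    simp [G.adj_comm u v]
  -- bound each inner sum
  have hkey : ∀ u, (∑ v ∈ G.neighborFinset u,
      (x u : ℝ) * (lam / (a * D u ^ μ * D v ^ ν)) * D v ^ α)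
      ≤ (lam / a) * ((x u : ℝ) * D u ^ α) := by
    intro u
    have step1 : (∑ v ∈ G.neighborFinset u,
        (x u : ℝ) * (lam / (a * D u ^ μ * D v ^ ν)) * D v ^ α)
        ≤ ∑ _v ∈ G.neighborFinset u, (x u : ℝ) * (lam / (a * D u ^ μ)) := by
      apply Finset.sum_le_sum
      intro v _
      have hrw : (x u : ℝ) * (lam / (a * D u ^ μ * D v ^ ν)) * D v ^ α
          = (x u : ℝ) * (lam / (a * D u ^ μ)) * (D v ^ α / D v ^ ν) := by
        field_simp
      rw [hrw]
      have hle : D v ^ α / D v ^ ν ≤ 1 := by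
        rw [div_le_one (Real.rpow_pos_of_pos (hD0 v) ν)]
        exact Real.rpow_le_rpow_of_exponent_le (hD1 v) hα2
      have hnn : 0 ≤ (x u : ℝ) * (lam / (a * D u ^ μ)) := by
        apply mul_nonneg (Nat.cast_nonneg _)
        apply div_nonneg hlam0.le
        exact mul_nonneg ha.le (Real.rpow_pos_of_pos (hD0 u) μ).le
      exact mul_le_of_le_one_right hnn hle
    have step2 : (∑ _v ∈ G.neighborFinset u, (x u : ℝ) * (lam / (a * D u ^ μ)))
        = D u * ((x u : ℝ) * (lam / (a * D u ^ μ))) := by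
      rw [Finset.sum_const, G.card_neighborFinset_eq_degree, nsmul_eq_mul, hD]
    have step3 : D u * ((x u : ℝ) * (lam / (a * D u ^ μ)))
        = (lam / a) * ((x u : ℝ) * (D u ^ (1 - μ))) := by
      rw [Real.rpow_sub (hD0 u), Real.rpow_one]
      field_simp
    have step4 : D u ^ (1 - μ) ≤ D u ^ α :=
      Real.rpow_le_rpow_of_exponent_le (hD1 u) hα1
    calc (∑ v ∈ G.neighborFinset u,
        (x u : ℝ) * (lam / (a * D u ^ μ * D v ^ ν)) * D v ^ α)
        ≤ D u * ((x u : ℝ) * (lam / (a * D u ^ μ))) := step1.trans step2.le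
      _ = (lam / a) * ((x u : ℝ) * (D u ^ (1 - μ))) := step3
      _ ≤ (lam / a) * ((x u : ℝ) * D u ^ α) := by
          apply mul_le_mul_of_nonneg_left _ (div_nonneg hlam0.le ha.le)
          exact mul_le_mul_of_nonneg_left step4 (Nat.cast_nonneg _)
  have hmain : (∑ v, ∑ u ∈ G.neighborFinset v,
      (x u : ℝ) * (lam / (a * D u ^ μ * D v ^ ν)) * D v ^ α)
      ≤ (lam / a) * ∑ u, (x u : ℝ) * D u ^ α := by
    rw [hswap, Finset.mul_sum]
    exact Finset.sum_le_sum fun u _ => hkey u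
  refine ⟨hmain, hmain.trans ?_⟩
  have hsum_nn : 0 ≤ ∑ u, (x u : ℝ) * D u ^ α := by
    apply Finset.sum_nonneg
    intro u _
    exact mul_nonneg (Nat.cast_nonneg _) (Real.rpow_pos_of_pos (hD0 u) α).le
  calc (lam / a) * ∑ u, (x u : ℝ) * D u ^ α
      ≤ 1 * ∑ u, (x u : ℝ) * D u ^ α := by
        apply mul_le_mul_of_nonneg_right _ hsum_nn
        exact (div_le_one ha).mpr hlam
    _ = ∑ u, (x u : ℝ) * D u ^ α := one_mul _
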